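/- Suppose d1, d2 > 0 and A0, B0 ∈ ℝ with A0 > 0 and A0 + B0 < 0, and suppose Δ := (d1 + d2)^2*A0^2 + 4*d1*d2*A0*B0 > 0. Define r^T(x) = −d2*x*(d1*x − A0)/(d1*x − A0 − B0) for x > 0, and x_± = [(d2 − d1)*A0 ± sqrt(Δ)]/(2*d1*d2). Then for every x > 0, r^T(x) > A0 if and only if x_− < x < x_+. -/

import Mathlib

/-- For `d1, d2 > 0`, `A0 > 0`, `A0 + B0 < 0`, and
`Δ = (d1+d2)² A0² + 4 d1 d2 A0 B0 > 0`, with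
`r^T(x) = −d2 x (d1 x − A0)/(d1 x − A0 − B0)` and
`x_± = [(d2 − d1) A0 ± √Δ]/(2 d1 d2)`: for every `x > 0`,
`r^T(x) > A0` iff `x_− < x < x_+`. -/
theorem holling_tanner_turing_exceeds_hopf_iff
    (d1 d2 A0 B0 : ℝ) (hd1 : 0 < d1) (hd2 : 0 < d2)
    (hA0 : 0 < A0) (hAB : A0 + B0 < 0)
    (Δ : ℝ) (hΔdef : Δ = (d1 + d2)^2 * A0^2 + 4*d1*d2*A0*B0) (hΔ : 0 < Δ)
    (xm xp : ℝ)
    (hxm : xm = ((d2 - d1)*A0 - Real.sqrt Δ) / (2*d1*d2))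
    (hxp : xp = ((d2 - d1)*A0 + Real.sqrt Δ) / (2*d1*d2)) :
    ∀ x : ℝ, 0 < x →
      (A0 < -(d2 * x * (d1 * x - A0)) / (d1 * x - A0 - B0) ↔ xm < x ∧ x < xp) := by
  intro x hx
  have hD : 0 < d1 * x - A0 - B0 := by nlinarith
  have hs : Real.sqrt Δ ^ 2 = Δ := Real.sq_sqrt hΔ.le
  have hspos : 0 < Real.sqrt Δ := Real.sqrt_pos.mpr hΔ
  have hdd : 0 < d1 * d2 := mul_pos hd1 hd2
  have hlt : xm < xp := by
    rw [hxm, hxp, div_lt_div_iff₀ (by positivity) (by positivity)]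
    nlinarith
  have heq : A0 * (d1 * x - A0 - B0) + d2 * x * (d1 * x - A0)
      = d1 * d2 * ((x - xm) * (x - xp)) := by
    subst hxm hxp
    field_simp
    linear_combination hs + hΔdef
  rw [lt_div_iff₀ hD]
  constructor
  · intro h
    have hq : d1 * d2 * ((x - xm) * (x - xp)) < 0 := by linarith
    have key : (x - xm) * (x - xp) < 0 := by
      by_contra hc
      push_neg at hc
      nlinarith [mul_nonneg hdd.le hc]
    rcases mul_neg_iff.mp key with ⟨ha, hb⟩ | ⟨ha, hb⟩
    · exact ⟨by linarith, by linarith⟩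
    · linarith
  · rintro ⟨h1, h2⟩
    nlinarith [mul_pos hdd (mul_pos (sub_pos.2 h1) (sub_pos.2 h2))]
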